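/- arXiv:1407.3218 — 2 statements merged into one kernel-verified Lean document; each statement's English description precedes it below -/
import Mathlib

section
/- Let g: [0,1] → ℝ be continuous and A, B ∈ ℝ. Then there exists a unique solution u of the boundary value problem Lu = g, u(0) = A, u(1) = B on [0,1], and it is given explicitly by u(x) = f(x) + ∫₀¹ K(x,y) g(y) dy, where f(x) := (B ∫₀^x e^{−Σ(y)} dy + A ∫_x^1 e^{−Σ(y)} dy) / ∫₀¹ e^{−Σ(y)} dy and K(x,y) := 1_{y ≤ x} (2 e^{Σ(y)}/σ²(y)) ∫_y^x e^{−Σ(z)} dz − 2 (∫₀^x e^{−Σ(r)} dr / ∫₀¹ e^{−Σ(r)} dr) (e^{Σ(y)}/σ²(y)) ∫_y^1 e^{−Σ(z)} dz. -/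
open Set MeasureTheory intervalIntegral

/-- A function `u ∈ C¹([a,b])` is a solution of the boundary value problem
`Lu = ℓ`, `u(a) = A`, `u(b) = B` for the second order operator `L` with generalized
drift (with data `σ` and `Σ = Sig`) if `u(a) = A`, `u(b) = B` and there is `x₁ ∈ ℝ`
such that `u'(x) = e^{−Σ(x)} (2 ∫_a^x e^{Σ(y)} ℓ(y)/σ²(y) dy + x₁)` on `[a,b]`. -/
def IsBVPSolutionLin (σ Sig : ℝ → ℝ) (a b A B : ℝ) (ℓ : ℝ → ℝ) (u : ℝ → ℝ) : Prop :=
  u a = A ∧ u b = B ∧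
  ∃ x₁ : ℝ, ∀ x ∈ Set.Icc a b,
    HasDerivWithinAt u
      (Real.exp (-(Sig x)) *
        (2 * (∫ y in a..x, Real.exp (Sig y) * ℓ y / (σ y) ^ 2) + x₁))
      (Set.Icc a b) x

/-- The kernel `K(x,y)` of Proposition P11. -/
noncomputable def Kker (σ Sig : ℝ → ℝ) (x y : ℝ) : ℝ :=
  (if y ≤ x then (2 * Real.exp (Sig y) / (σ y) ^ 2) *
      (∫ z in y..x, Real.exp (-(Sig z))) else 0)
  - 2 * ((∫ r in (0 : ℝ)..x, Real.exp (-(Sig r))) /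
        (∫ r in (0 : ℝ)..1, Real.exp (-(Sig r))))
      * (Real.exp (Sig y) / (σ y) ^ 2) * (∫ z in y..1, Real.exp (-(Sig z)))

/-- The boundary part `f(x)` of the representation formula of Proposition P11. -/
noncomputable def bndry (Sig : ℝ → ℝ) (A B x : ℝ) : ℝ :=
  (B * (∫ y in (0 : ℝ)..x, Real.exp (-(Sig y)))
    + A * (∫ y in x..(1 : ℝ), Real.exp (-(Sig y))))
  / (∫ y in (0 : ℝ)..1, Real.exp (-(Sig y)))

/-- for continuous `g : [0,1] → ℝ` and `A, B ∈ ℝ` there exists a unique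
solution of the boundary value problem `Lu = g`, `u(0) = A`, `u(1) = B`, and it is given
by `u(x) = f(x) + ∫₀¹ K(x,y) g(y) dy`. -/
theorem exists_unique_solution_linear_bvp
    (σ Sig g : ℝ → ℝ) (hσ : Continuous σ) (hSig : Continuous Sig)
    (hσpos : ∀ x, 0 < σ x) (hg : ContinuousOn g (Icc (0 : ℝ) 1)) (A B : ℝ) :
    ∃ u : ℝ → ℝ, IsBVPSolutionLin σ Sig 0 1 A B g u ∧
      (∀ x ∈ Icc (0 : ℝ) 1,
        u x = bndry Sig A B x + ∫ y in (0 : ℝ)..1, Kker σ Sig x y * g y) ∧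
      ∀ v : ℝ → ℝ, IsBVPSolutionLin σ Sig 0 1 A B g v → EqOn v u (Icc (0 : ℝ) 1) := by
  -- continuous extension of g
  set G : ℝ → ℝ := fun x => g (max 0 (min 1 x)) with hGdef
  have hGcont : Continuous G := by
    apply hg.comp_continuous (continuous_const.max (continuous_const.min continuous_id))
    intro x
    exact ⟨le_max_left _ _, max_le zero_le_one (min_le_left _ _)⟩
  have hGeq : ∀ x ∈ Icc (0:ℝ) 1, G x = g x := by
    intro x hx
    simp only [hGdef]
    rw [min_eq_right hx.2, max_eq_right hx.1]
  -- basic functions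
  have heScont : Continuous (fun t => Real.exp (-(Sig t))) := Real.continuous_exp.comp hSig.neg
  set eS : ℝ → ℝ := fun t => Real.exp (-(Sig t)) with heS
  set h : ℝ → ℝ := fun y => 2 * Real.exp (Sig y) * G y / (σ y) ^ 2 with hhdef
  have hhcont : Continuous h := by
    apply Continuous.div
    · exact (continuous_const.mul (Real.continuous_exp.comp hSig)).mul hGcont
    · exact hσ.pow 2
    · exact fun y => pow_ne_zero 2 (hσpos y).ne'
  set E : ℝ → ℝ := fun x => ∫ t in (0:ℝ)..x, eS t with hEdef
  set W : ℝ → ℝ := fun x => ∫ t in (0:ℝ)..x, h t with hWdef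
  have hE : ∀ x, HasDerivAt E (eS x) x := fun x =>
    integral_hasDerivAt_right (heScont.intervalIntegrable _ _)
      (heScont.stronglyMeasurableAtFilter _ _) heScont.continuousAt
  have hW : ∀ x, HasDerivAt W (h x) x := fun x =>
    integral_hasDerivAt_right (hhcont.intervalIntegrable _ _)
      (hhcont.stronglyMeasurableAtFilter _ _) hhcont.continuousAt
  have hEcont : Continuous E := continuous_iff_continuousAt.2 fun x => (hE x).continuousAt
  have hWcont : Continuous W := continuous_iff_continuousAt.2 fun x => (hW x).continuousAt
  have hE0 : E 0 = 0 := integral_same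
  have hE1pos : 0 < E 1 :=
    intervalIntegral_pos_of_pos (heScont.intervalIntegrable _ _)
      (fun x => Real.exp_pos _) one_pos
  have hE1ne : E 1 ≠ 0 := hE1pos.ne'
  -- subtraction identities
  have hEsub : ∀ a b : ℝ, (∫ z in a..b, Real.exp (-(Sig z))) = E b - E a := by
    intro a b
    rw [hEdef]
    exact (integral_interval_sub_left (heScont.intervalIntegrable 0 b)
      (heScont.intervalIntegrable 0 a)).symm
  have hfold : ∀ b : ℝ, (∫ r in (0:ℝ)..b, Real.exp (-(Sig r))) = E b := by
    intro b; rw [hEsub 0 b, hE0, sub_zero]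
  -- constants
  set I1 : ℝ := ∫ t in (0:ℝ)..1, eS t * W t with hI1def
  set c₁ : ℝ := (B - A - I1) / E 1 with hc₁def
  set u : ℝ → ℝ := fun x => A + (∫ t in (0:ℝ)..x, eS t * W t) + c₁ * E x with hudef
  have heSWcont : Continuous (fun t => eS t * W t) := heScont.mul hWcont
  have hu : ∀ x, HasDerivAt u (eS x * W x + c₁ * eS x) x := by
    intro x
    exact ((integral_hasDerivAt_right (heSWcont.intervalIntegrable _ _)
      (heSWcont.stronglyMeasurableAtFilter _ _) heSWcont.continuousAt).const_add A).add
      ((hE x).const_mul c₁)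
  -- link between W and the integral of g
  have hWlink : ∀ x ∈ Icc (0:ℝ) 1,
      W x = 2 * ∫ y in (0:ℝ)..x, Real.exp (Sig y) * g y / (σ y) ^ 2 := by
    intro x hx
    rw [hWdef, ← intervalIntegral.integral_const_mul]
    apply integral_congr
    intro y hy
    have hy' : y ∈ Icc (0:ℝ) 1 := by
      rw [uIcc_of_le hx.1] at hy
      exact Icc_subset_Icc le_rfl hx.2 hy
    simp only [hhdef]
    rw [hGeq y hy']
    ring
  -- integration by parts identity
  have ibp : ∀ x : ℝ, (∫ y in (0:ℝ)..x, h y * (E x - E y)) = ∫ t in (0:ℝ)..x, eS t * W t := by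
    intro x
    have hprod : ∀ t ∈ uIcc (0:ℝ) x,
        HasDerivAt (fun t => E t * W t) (eS t * W t + E t * h t) t :=
      fun t _ => (hE t).mul (hW t)
    have hint : IntervalIntegrable (fun t => eS t * W t + E t * h t) volume 0 x :=
      (heSWcont.add (hEcont.mul hhcont)).intervalIntegrable _ _
    have h0 := integral_eq_sub_of_hasDerivAt hprod hint
    rw [integral_add (g := fun t => E t * h t) (heSWcont.intervalIntegrable _ _)
      ((hEcont.mul hhcont).intervalIntegrable _ _), hE0, zero_mul, sub_zero] at h0
    have h1 : (∫ y in (0:ℝ)..x, h y * (E x - E y))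
        = (∫ y in (0:ℝ)..x, E x * h y) - ∫ y in (0:ℝ)..x, E y * h y := by
      rw [← integral_sub (f := fun y => E x * h y) (g := fun y => E y * h y) ((continuous_const.mul hhcont).intervalIntegrable _ _)
        ((hEcont.mul hhcont).intervalIntegrable _ _)]
      apply integral_congr
      intro y _
      ring
    rw [h1, intervalIntegral.integral_const_mul]
    have hWx : (∫ y in (0:ℝ)..x, h y) = W x := rfl
    rw [hWx]
    linarith
  -- the solution property
  have husol : IsBVPSolutionLin σ Sig 0 1 A B g u := by
    refine ⟨?_, ?_, c₁, ?_⟩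
    · simp [hudef, hE0]
    · have : u 1 = A + I1 + c₁ * E 1 := by simp [hudef, hI1def]
      rw [this, hc₁def]
      field_simp
      ring
    · intro x hx
      have h1 := (hu x).hasDerivWithinAt (s := Icc (0:ℝ) 1)
      have h2 : eS x * W x + c₁ * eS x
          = Real.exp (-(Sig x)) *
            (2 * (∫ y in (0:ℝ)..x, Real.exp (Sig y) * g y / (σ y) ^ 2) + c₁) := by
        rw [← hWlink x hx]
        simp only [heS]
        ring
      rwa [h2] at h1
  refine ⟨u, husol, ?_, ?_⟩
  · -- explicit formula
    intro x hx
    -- rewrite the kernel integrand on [0,1]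
    have hcongr : ∀ y ∈ Icc (0:ℝ) 1, Kker σ Sig x y * g y
        = (if y ≤ x then h y * (E x - E y) else 0)
          - (E x / E 1) * (h y * (E 1 - E y)) := by
      intro y hy
      simp only [Kker]
      rw [hEsub y x, hEsub y 1, hfold x, hfold 1]
      simp only [hhdef]
      rw [hGeq y hy]
      split_ifs with hc <;> ring
    have hRHS : (∫ y in (0:ℝ)..1, Kker σ Sig x y * g y)
        = (∫ y in (0:ℝ)..1, (if y ≤ x then h y * (E x - E y) else 0))
          - (E x / E 1) * I1 := by
      rw [integral_congr (g := fun y =>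
        (if y ≤ x then h y * (E x - E y) else 0) - (E x / E 1) * (h y * (E 1 - E y)))
        (by rw [uIcc_of_le zero_le_one]; exact hcongr)]
      -- integrability of the indicator part on [0,x] and [x,1]
      have hind1 : IntervalIntegrable (fun y => if y ≤ x then h y * (E x - E y) else 0)
          volume 0 x := by
        apply IntervalIntegrable.congr_ae
          ((hhcont.mul (continuous_const.sub hEcont)).intervalIntegrable 0 x :
            IntervalIntegrable (fun y => h y * (E x - E y)) volume 0 x)
        filter_upwards [ae_restrict_mem measurableSet_uIoc] with y hy
        rw [uIoc_of_le hx.1] at hy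
        rw [if_pos hy.2]
        rfl
      have hind2 : IntervalIntegrable (fun y => if y ≤ x then h y * (E x - E y) else 0)
          volume x 1 := by
        apply IntervalIntegrable.congr_ae (_root_.intervalIntegrable_const (c := (0:ℝ)))
        filter_upwards [ae_restrict_mem measurableSet_uIoc] with y hy
        rw [uIoc_of_le hx.2] at hy
        rw [if_neg (not_le.2 hy.1)]
      rw [integral_sub (g := fun y => (E x / E 1) * (h y * (E 1 - E y))) (hind1.trans hind2)
        ((continuous_const.mul (hhcont.mul (continuous_const.sub hEcont))).intervalIntegrable _ _),
        intervalIntegral.integral_const_mul]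
      have : (∫ y in (0:ℝ)..1, h y * (E 1 - E y)) = I1 := by rw [hI1def]; exact ibp 1
      rw [this]
    rw [hRHS]
    -- split the indicator integral
    have hsplit : (∫ y in (0:ℝ)..1, (if y ≤ x then h y * (E x - E y) else 0))
        = ∫ t in (0:ℝ)..x, eS t * W t := by
      have hind1 : IntervalIntegrable (fun y => if y ≤ x then h y * (E x - E y) else 0)
          volume 0 x := by
        apply IntervalIntegrable.congr_ae
          ((hhcont.mul (continuous_const.sub hEcont)).intervalIntegrable 0 x :
            IntervalIntegrable (fun y => h y * (E x - E y)) volume 0 x)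
        filter_upwards [ae_restrict_mem measurableSet_uIoc] with y hy
        rw [uIoc_of_le hx.1] at hy
        rw [if_pos hy.2]
        rfl
      have hind2 : IntervalIntegrable (fun y => if y ≤ x then h y * (E x - E y) else 0)
          volume x 1 := by
        apply IntervalIntegrable.congr_ae (_root_.intervalIntegrable_const (c := (0:ℝ)))
        filter_upwards [ae_restrict_mem measurableSet_uIoc] with y hy
        rw [uIoc_of_le hx.2] at hy
        rw [if_neg (not_le.2 hy.1)]
      rw [← integral_add_adjacent_intervals hind1 hind2]
      have hA : (∫ y in (0:ℝ)..x, (if y ≤ x then h y * (E x - E y) else 0))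
          = ∫ y in (0:ℝ)..x, h y * (E x - E y) := by
        apply integral_congr
        intro y hy
        rw [uIcc_of_le hx.1] at hy
        simp only [if_pos hy.2]
      have hB : (∫ y in x..(1:ℝ), (if y ≤ x then h y * (E x - E y) else 0)) = 0 := by
        have hz : (∫ y in x..(1:ℝ), (if y ≤ x then h y * (E x - E y) else 0))
            = ∫ _y in x..(1:ℝ), (0:ℝ) := by
          apply intervalIntegral.integral_congr_ae
          apply Filter.Eventually.of_forall
          intro y hy
          rw [uIoc_of_le hx.2] at hy
          simp only [if_neg (not_le.2 hy.1)]
        rw [hz, intervalIntegral.integral_zero]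
      rw [hA, hB, add_zero, ibp x]
    rw [hsplit]
    -- final algebra
    simp only [bndry, hudef]
    rw [hfold x, hfold 1, hEsub x 1]
    rw [hc₁def]
    field_simp
    ring
  · -- uniqueness
    intro v hv
    obtain ⟨hu0, hu1, xu, hu'⟩ := husol
    obtain ⟨hv0, hv1, xv, hv'⟩ := hv
    set φ : ℝ → ℝ := fun t => v t - u t - (xv - xu) * E t with hφdef
    have hφd : ∀ t ∈ Icc (0:ℝ) 1, HasDerivWithinAt φ 0 (Icc (0:ℝ) 1) t := by
      intro t ht
      have := ((hv' t ht).sub (hu' t ht)).sub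
        (((hE t).hasDerivWithinAt (s := Icc (0:ℝ) 1)).const_mul (xv - xu))
      convert this using 1
      · rfl
      · rfl
      show (0:ℝ) = _ - _ - (xv - xu) * Real.exp (-(Sig t))
      ring
      rfl
    have hφcont : ContinuousOn φ (Icc (0:ℝ) 1) :=
      fun t ht => (hφd t ht).continuousWithinAt
    have hconst := constant_of_has_deriv_right_zero hφcont (fun t ht =>
      (hφd t (Ico_subset_Icc_self ht)).mono_of_mem_nhdsWithin (Icc_mem_nhdsGE_of_mem ht))
    have hφ0 : φ 0 = 0 := by simp [hφdef, hu0, hv0, hE0]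
    have hc0 : xv - xu = 0 := by
      have h1 := hconst 1 (by constructor <;> norm_num)
      rw [hφ0, hφdef] at h1
      simp only at h1
      rw [hu1, hv1] at h1
      have : (xv - xu) * E 1 = 0 := by linarith
      exact (mul_eq_zero.1 this).resolve_right hE1ne
    intro t ht
    have := hconst t ht
    rw [hφ0, hφdef] at this
    simp only [hc0, zero_mul, sub_zero] at this
    linarith
end

section
/- Let F: ℝ³ → ℝ be continuous and such that, for every compact interval K ⊂ ℝ, the restriction of (x,y,z) ↦ F(x,y,z) to K × ℝ² is Lipschitz in (y,z) uniformly in x ∈ K. Then for every x₀, x₁ ∈ ℝ there exists a unique function u ∈ C¹(ℝ) with u(0) = x₀ such that u'(x) = e^{−Σ(x)} ( 2 ∫₀^x e^{Σ(y)} F(y, u(y), u'(y))/σ²(y) dy + x₁ ) for all x ∈ ℝ; that is, the semilinear problem Lu = F(x, u, u'), u(0) = x₀, u'(0) = x₁ has a unique C¹-solution on the real line. -/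
open Set MeasureTheory intervalIntegral

section ODEAux

set_option linter.unusedSectionVars false

variable {E : Type*} [NormedAddCommGroup E] [NormedSpace ℝ E] [CompleteSpace E]

set_option linter.unusedSectionVars false

variable {E : Type*} [NormedAddCommGroup E] [NormedSpace ℝ E] [CompleteSpace E]

/-- Glue two solutions at the junction point `b`. -/
lemma ode_glue (v : ℝ → E → E) {a b c : ℝ} (hab : a ≤ b) (hbc : b ≤ c)
    (f g : ℝ → E)
    (hf : ∀ t ∈ Icc a b, HasDerivWithinAt f (v t (f t)) (Icc a b) t)
    (hg : ∀ t ∈ Icc b c, HasDerivWithinAt g (v t (g t)) (Icc b c) t)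
    (hfg : f b = g b) :
    ∃ h : ℝ → E, (∀ t ∈ Icc a b, h t = f t) ∧
      ∀ t ∈ Icc a c, HasDerivWithinAt h (v t (h t)) (Icc a c) t := by
  classical
  set h : ℝ → E := fun t => if t ≤ b then f t else g t with hh
  have hhf : ∀ t ∈ Icc a b, h t = f t := fun t ht => if_pos ht.2
  have hhg : ∀ t ∈ Icc b c, h t = g t := by
    intro t ht
    by_cases h' : t ≤ b
    · have : t = b := le_antisymm h' ht.1
      simp [hh, this, hfg]
    · simp [hh, h']
  refine ⟨h, hhf, ?_⟩
  intro t ht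
  rcases lt_trichotomy t b with h1 | h1 | h1
  · have ht' : t ∈ Icc a b := ⟨ht.1, h1.le⟩
    have hmem : Iio b ∈ nhds t := Iio_mem_nhds h1
    rw [← hasDerivWithinAt_inter hmem, hhf t ht']
    exact ((hf t ht').mono (fun s hs => ⟨hs.1.1, hs.2.le⟩)).congr
      (fun s hs => hhf s ⟨hs.1.1, hs.2.le⟩) (hhf t ht')
  · subst h1
    have hmb : t ∈ Icc a t := ⟨hab, le_rfl⟩
    have h₁ : HasDerivWithinAt h (v t (h t)) (Icc a t) t := by
      rw [hhf t hmb]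
      exact (hf t hmb).congr (fun s hs => hhf s hs) (hhf t hmb)
    have h₂ : HasDerivWithinAt h (v t (h t)) (Icc t c) t := by
      rw [hhf t hmb, hfg]
      exact (hg t ⟨le_rfl, hbc⟩).congr (fun s hs => hhg s hs) ((hhf t hmb).trans hfg)
    have := h₁.union h₂
    rwa [Icc_union_Icc_eq_Icc hab hbc] at this
  · have ht' : t ∈ Icc b c := ⟨h1.le, ht.2⟩
    have hmem : Ioi b ∈ nhds t := Ioi_mem_nhds h1
    rw [← hasDerivWithinAt_inter hmem, hhg t ht']
    exact ((hg t ht').mono (fun s hs => ⟨hs.2.le, hs.1.2⟩)).congr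
      (fun s hs => hhg s ⟨hs.2.le, hs.1.2⟩) (hhg t ht')

/-- Forward global existence on a compact interval for a vector field Lipschitz in space
uniformly in time. -/
lemma ode_exists_forward (v : ℝ → E → E) {a b : ℝ} (hab : a ≤ b) (K : NNReal)
    (hK : ∀ t ∈ Icc a b, LipschitzWith K (v t))
    (hv : ∀ x : E, ContinuousOn (fun t => v t x) (Icc a b))
    (p₀ : E) :
    ∃ f : ℝ → E, f a = p₀ ∧ ∀ t ∈ Icc a b, HasDerivWithinAt f (v t (f t)) (Icc a b) t := by
  set k : ℝ := (K : ℝ) with hk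
  have hk0 : 0 ≤ k := K.coe_nonneg
  set ε : ℝ := 1 / (2 * (k + 1)) with hε
  have hεpos : 0 < ε := by positivity
  -- key inductive claim
  have main : ∀ n : ℕ, ∃ f : ℝ → E, f a = p₀ ∧
      ∀ t ∈ Icc a (min (a + n * ε) b),
        HasDerivWithinAt f (v t (f t)) (Icc a (min (a + n * ε) b)) t := by
    intro n
    induction n with
    | zero =>
      refine ⟨fun _ => p₀, rfl, ?_⟩
      intro t ht
      have hmin : min (a + (0:ℕ) * ε) b = a := by
        simp [min_eq_left hab]
      rw [hmin] at ht ⊢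
      have : t = a := le_antisymm ht.2 ht.1
      subst this
      have : Icc t t = ({t} : Set ℝ) := Icc_self t
      rw [this, hasDerivWithinAt_iff_isLittleO, nhdsWithin_singleton]
      simp [Asymptotics.isLittleO_pure]
    | succ n ih =>
      obtain ⟨f, hfa, hf⟩ := ih
      set c : ℝ := min (a + n * ε) b with hc
      have hac : a ≤ c := by
        apply le_min _ hab
        nlinarith [hεpos, Nat.cast_nonneg (α := ℝ) n]
      by_cases hcb : b ≤ c
      · have hcb' : c = b := le_antisymm (min_le_right _ _) hcb
        have hmin : min (a + (n+1 : ℕ) * ε) b = b := by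
          apply min_eq_right
          have h1 : b ≤ a + n * ε := by
            by_contra h
            push_neg at h
            have : c = a + n * ε := min_eq_left (le_of_lt h)
            rw [hcb'] at this
            nlinarith
          push_cast
          nlinarith
        refine ⟨f, hfa, ?_⟩
        rw [hmin, ← hcb']
        exact hf
      · push_neg at hcb
        have hcb' : c < b := hcb
        have hceq : c = a + n * ε := by
          rcases min_cases (a + n * ε) b with h | h
          · exact h.1
          · exact absurd h.1 (by rw [← hc] at *; linarith)
        set c' : ℝ := min (a + (n+1 : ℕ) * ε) b with hc'
        have hcc' : c ≤ c' := by
          apply le_min _ hcb'.le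
          rw [hceq]; push_cast; nlinarith
        have hc'b : c' ≤ b := min_le_right _ _
        have hc'c : c' - c ≤ ε := by
          have : c' ≤ a + (n+1 : ℕ) * ε := min_le_left _ _
          rw [hceq]; push_cast at this ⊢; nlinarith
        -- local Picard-Lindelöf step on [c, c']
        obtain ⟨C₀, hC₀⟩ := isCompact_Icc.exists_bound_of_continuousOn (hv (f c))
        set C₁ : ℝ := max C₀ 0 with hC₁
        have hC₁0 : 0 ≤ C₁ := le_max_right _ _
        set R : ℝ := C₁ + 1 with hR
        set C : ℝ := C₁ + k * R with hCdef
        have hsub : Icc c c' ⊆ Icc a b := Icc_subset_Icc hac hc'b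
        have hR0 : 0 ≤ R := by positivity
        have hC0 : 0 ≤ C := by positivity
        have hpl : IsPicardLindelof v (tmin := c) (tmax := c') ⟨c, ⟨le_rfl, hcc'⟩⟩ (f c)
            R.toNNReal 0 C.toNNReal K := by
          refine ⟨?_, ?_, ?_, ?_⟩
          · exact fun t ht => (hK t (hsub ht)).lipschitzOnWith
          · exact fun x _ => (hv x).mono hsub
          · intro t ht x hx
            rw [Real.coe_toNNReal _ hC0]
            rw [Real.coe_toNNReal _ hR0] at hx
            have h1 : ‖v t x - v t (f c)‖ ≤ k * R := by
              have := (hK t (hsub ht)).dist_le_mul x (f c)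
              rw [dist_eq_norm] at this
              calc ‖v t x - v t (f c)‖ ≤ k * dist x (f c) := this
                _ ≤ k * R := by
                    have := mem_closedBall_iff_norm.mp hx
                    rw [← dist_eq_norm] at this
                    nlinarith [dist_nonneg (x := x) (y := f c)]
            calc ‖v t x‖ = ‖v t x - v t (f c) + v t (f c)‖ := by rw [sub_add_cancel]
              _ ≤ ‖v t x - v t (f c)‖ + ‖v t (f c)‖ := norm_add_le _ _
              _ ≤ k * R + C₁ := by
                  have := hC₀ t (hsub ht)
                  exact add_le_add h1 (le_trans this (le_max_left _ _))
              _ = C := by rw [hCdef]; ring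
          · show (C.toNNReal : ℝ) * max (c' - c) (c - c) ≤ (R.toNNReal : ℝ) - ((0 : NNReal) : ℝ)
            rw [Real.coe_toNNReal _ hC0, Real.coe_toNNReal _ hR0, NNReal.coe_zero, sub_zero]
            have hmax : max (c' - c) (c - c) = c' - c := by
              rw [max_eq_left]; linarith
            rw [hmax]
            have hC : 0 ≤ C := by positivity
            have h2 : C * (c' - c) ≤ C * ε := by
              apply mul_le_mul_of_nonneg_left hc'c hC
            have h3 : C * ε ≤ R := by
              have hCle : C ≤ (k + 1) * (C₁ + 1) := by rw [hCdef, hR]; nlinarith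
              have : (k + 1) * (C₁ + 1) * ε = (C₁ + 1) / 2 := by
                rw [hε]; field_simp
              nlinarith [hεpos.le]
            linarith
        obtain ⟨g, hgc, hg⟩ := hpl.exists_eq_forall_mem_Icc_hasDerivWithinAt₀
        obtain ⟨h, hhf, hh⟩ := ode_glue v hac hcc' f g hf hg hgc.symm
        exact ⟨h, by rw [hhf a ⟨le_rfl, hac⟩, hfa], hh⟩
  -- choose `n` large enough
  obtain ⟨n, hn⟩ := exists_nat_ge ((b - a) / ε)
  have hbn : b ≤ a + n * ε := by
    have := (div_le_iff₀ hεpos).mp hn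
    linarith
  obtain ⟨f, hfa, hf⟩ := main n
  rw [min_eq_right hbn] at hf
  exact ⟨f, hfa, hf⟩


/-- Backward version. -/
lemma ode_exists_backward (v : ℝ → E → E) {a b : ℝ} (hab : a ≤ b) (K : NNReal)
    (hK : ∀ t ∈ Icc a b, LipschitzWith K (v t))
    (hv : ∀ x : E, ContinuousOn (fun t => v t x) (Icc a b))
    (p₀ : E) :
    ∃ f : ℝ → E, f b = p₀ ∧ ∀ t ∈ Icc a b, HasDerivWithinAt f (v t (f t)) (Icc a b) t := by
  set w : ℝ → E → E := fun t x => -v (-t) x with hw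
  have hmapsTo : MapsTo Neg.neg (Icc (-b) (-a)) (Icc a b) := by
    intro s hs
    exact ⟨le_neg.mp hs.2, neg_le.mp hs.1⟩
  have hK' : ∀ t ∈ Icc (-b) (-a), LipschitzWith K (w t) := by
    intro t ht
    apply LipschitzWith.of_dist_le_mul
    intro x y
    rw [hw]
    simp only [dist_neg_neg]
    exact (hK (-t) (hmapsTo ht)).dist_le_mul x y
  have hv' : ∀ x : E, ContinuousOn (fun t => w t x) (Icc (-b) (-a)) := by
    intro x
    exact ((hv x).comp continuousOn_neg hmapsTo).neg
  obtain ⟨g, hga, hg⟩ := ode_exists_forward w (by linarith : -b ≤ -a) K hK' hv' p₀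
  refine ⟨fun t => g (-t), by simpa using hga, ?_⟩
  intro t ht
  have ht' : -t ∈ Icc (-b) (-a) := ⟨neg_le_neg ht.2, neg_le_neg ht.1⟩
  have hmaps2 : MapsTo Neg.neg (Icc a b) (Icc (-b) (-a)) := by
    intro s hs
    exact ⟨neg_le_neg hs.2, neg_le_neg hs.1⟩
  have hcomp := HasDerivWithinAt.scomp (h := Neg.neg) (h' := -1) t (hg (-t) ht')
    ((hasDerivAt_neg t).hasDerivWithinAt) hmaps2
  convert hcomp using 1
  · rfl
  rw [hw]
  simp [Function.comp]

/-- Two-sided existence on `[-T, T]`. -/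
lemma ode_exists_Icc (v : ℝ → E → E) {T : ℝ} (hT : 0 ≤ T) (K : NNReal)
    (hK : ∀ t ∈ Icc (-T) T, LipschitzWith K (v t))
    (hv : ∀ x : E, ContinuousOn (fun t => v t x) (Icc (-T) T))
    (p₀ : E) :
    ∃ f : ℝ → E, f 0 = p₀ ∧ ∀ t ∈ Icc (-T) T, HasDerivWithinAt f (v t (f t)) (Icc (-T) T) t := by
  have hT' : -T ≤ 0 := by linarith
  have hsub1 : Icc (-T) 0 ⊆ Icc (-T) T := Icc_subset_Icc le_rfl hT
  have hsub2 : Icc 0 T ⊆ Icc (-T) T := Icc_subset_Icc hT' le_rfl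
  obtain ⟨fm, hfm0, hfm⟩ := ode_exists_backward v hT' K (fun t ht => hK t (hsub1 ht))
    (fun x => (hv x).mono hsub1) p₀
  obtain ⟨fp, hfp0, hfp⟩ := ode_exists_forward v hT K (fun t ht => hK t (hsub2 ht))
    (fun x => (hv x).mono hsub2) p₀
  obtain ⟨h, hhm, hh⟩ := ode_glue v hT' hT fm fp hfm hfp (by rw [hfm0, hfp0])
  exact ⟨h, by rw [hhm 0 ⟨hT', le_rfl⟩, hfm0], hh⟩

/-- Global existence and uniqueness for an ODE whose right-hand side is continuous in time and
Lipschitz in space, uniformly on compact time intervals. -/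
lemma ode_exists_unique_global (v : ℝ → E → E)
    (hv : ∀ x : E, Continuous (fun t => v t x))
    (hK : ∀ T : ℝ, 0 ≤ T → ∃ K : NNReal, ∀ t ∈ Icc (-T) T, LipschitzWith K (v t))
    (p₀ : E) :
    ∃! f : ℝ → E, f 0 = p₀ ∧ ∀ t, HasDerivAt f (v t (f t)) t := by
  have ode_exists_Icc' : ∀ T : ℝ, 0 ≤ T →
      ∃ f : ℝ → E, f 0 = p₀ ∧ ∀ t ∈ Icc (-T) T,
        HasDerivWithinAt f (v t (f t)) (Icc (-T) T) t := by
    intro T hT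
    obtain ⟨K, hKT⟩ := hK T hT
    exact ode_exists_Icc v hT K hKT (fun x => (hv x).continuousOn) p₀
  -- uniqueness on compact intervals
  have huniq : ∀ (f g : ℝ → E), f 0 = g 0 →
      ∀ (T : ℝ), 0 < T →
      (∀ t ∈ Icc (-T) T, HasDerivWithinAt f (v t (f t)) (Icc (-T) T) t) →
      (∀ t ∈ Icc (-T) T, HasDerivWithinAt g (v t (g t)) (Icc (-T) T) t) →
      EqOn f g (Icc (-T) T) := by
    intro f g h0 T hT hf hg
    obtain ⟨K, hKT⟩ := hK T hT.le
    set s : ℝ → Set E := fun t => if t ∈ Icc (-T) T then univ else ∅ with hs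
    have hlip : ∀ t, LipschitzOnWith K (v t) (s t) := by
      intro t
      by_cases h : t ∈ Icc (-T) T
      · rw [hs]; simp only [if_pos h]
        exact (hKT t h).lipschitzOnWith
      · rw [hs]; simp only [if_neg h]
        exact lipschitzOnWith_empty _ _
    have hmem : ∀ (u : ℝ → E), ∀ t ∈ Ioo (-T) T, u t ∈ s t := by
      intro u t ht
      rw [hs]; simp [Ioo_subset_Icc_self ht]
    have hder : ∀ (u : ℝ → E),
        (∀ t ∈ Icc (-T) T, HasDerivWithinAt u (v t (u t)) (Icc (-T) T) t) →
        ∀ t ∈ Ioo (-T) T, HasDerivAt u (v t (u t)) t := by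
      intro u hu t ht
      exact (hu t (Ioo_subset_Icc_self ht)).hasDerivAt (Icc_mem_nhds ht.1 ht.2)
    have hcont : ∀ (u : ℝ → E),
        (∀ t ∈ Icc (-T) T, HasDerivWithinAt u (v t (u t)) (Icc (-T) T) t) →
        ContinuousOn u (Icc (-T) T) := fun u hu t ht => (hu t ht).continuousWithinAt
    exact ODE_solution_unique_of_mem_Icc (fun t _ => hlip t) (by constructor <;> linarith)
      (hcont f hf) (hder f hf) (hmem f) (hcont g hg) (hder g hg) (hmem g) h0
  -- the family of solutions
  choose sol hsol0 hsol using fun n : ℕ => ode_exists_Icc' n (Nat.cast_nonneg n)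
  -- compatibility
  have hcompat : ∀ (t : ℝ) (m n : ℕ), |t| < m → |t| < n → sol m t = sol n t := by
    intro t m n hm hn
    set T : ℝ := min (m : ℝ) n with hT
    have hT0 : 0 < T := lt_min ((abs_nonneg t).trans_lt hm) ((abs_nonneg t).trans_lt hn)
    have hsubm : Icc (-T) T ⊆ Icc (-(m:ℝ)) m :=
      Icc_subset_Icc (neg_le_neg (min_le_left _ _)) (min_le_left _ _)
    have hsubn : Icc (-T) T ⊆ Icc (-(n:ℝ)) n :=
      Icc_subset_Icc (neg_le_neg (min_le_right _ _)) (min_le_right _ _)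
    have hfm : ∀ s ∈ Icc (-T) T, HasDerivWithinAt (sol m) (v s (sol m s)) (Icc (-T) T) s :=
      fun s hs => (hsol m s (hsubm hs)).mono hsubm
    have hfn : ∀ s ∈ Icc (-T) T, HasDerivWithinAt (sol n) (v s (sol n s)) (Icc (-T) T) s :=
      fun s hs => (hsol n s (hsubn hs)).mono hsubn
    have h0 : sol m 0 = sol n 0 := by rw [hsol0 m, hsol0 n]
    have htmem : t ∈ Icc (-T) T := by
      have := abs_le.mp (le_of_lt (lt_min hm hn))
      exact ⟨this.1, this.2⟩
    exact huniq (sol m) (sol n) h0 T hT0 hfm hfn htmem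
  -- the glued global solution
  set f : ℝ → E := fun t => sol (⌈|t|⌉₊ + 1) t with hfdef
  have hflocal : ∀ (t : ℝ) (n : ℕ), |t| < n → f t = sol n t := by
    intro t n hn
    apply hcompat
    · have : |t| ≤ ⌈|t|⌉₊ := Nat.le_ceil _
      push_cast
      linarith
    · exact hn
  have hf0 : f 0 = p₀ := by
    rw [hflocal 0 1 (by simp), hsol0]
  have hfderiv : ∀ t, HasDerivAt f (v t (f t)) t := by
    intro t
    set n : ℕ := ⌈|t|⌉₊ + 2 with hn
    have htn : |t| + 1 < n := by
      have : |t| ≤ ⌈|t|⌉₊ := Nat.le_ceil _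
      rw [hn]
      push_cast
      linarith
    have htn' : |t| < n := by linarith [abs_nonneg t]
    have heq : f =ᶠ[nhds t] sol n := by
      have hopen : Ioo (t - 1) (t + 1) ∈ nhds t := Ioo_mem_nhds (by linarith) (by linarith)
      filter_upwards [hopen] with s hs
      apply hflocal
      have h1 : |s| < |t| + 1 := by
        rcases abs_cases s with ⟨h, _⟩ | ⟨h, _⟩ <;> rcases abs_cases t with ⟨h', _⟩ | ⟨h', _⟩ <;>
          rcases hs with ⟨hs1, hs2⟩ <;> linarith
      linarith
    have hd : HasDerivAt (sol n) (v t (sol n t)) t := by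
      apply (hsol n t ⟨by linarith [neg_abs_le t], by linarith [le_abs_self t]⟩).hasDerivAt
      apply Icc_mem_nhds
      · have := neg_abs_le t; linarith
      · have := le_abs_self t; linarith
    have hderiv := hd.congr_of_eventuallyEq heq
    rwa [show sol n t = f t from (hflocal t n htn').symm] at hderiv
  refine ⟨f, ⟨hf0, hfderiv⟩, ?_⟩
  -- uniqueness of the global solution
  rintro g ⟨hg0, hgderiv⟩
  funext t
  set T : ℝ := |t| + 1 with hT
  have hT0 : 0 < T := by positivity
  have hgd : ∀ s ∈ Icc (-T) T, HasDerivWithinAt g (v s (g s)) (Icc (-T) T) s :=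
    fun s _ => (hgderiv s).hasDerivWithinAt
  have hfd : ∀ s ∈ Icc (-T) T, HasDerivWithinAt f (v s (f s)) (Icc (-T) T) s :=
    fun s _ => (hfderiv s).hasDerivWithinAt
  have h0 : g 0 = f 0 := by rw [hg0, hf0]
  exact huniq g f h0 T hT0 hgd hfd
    ⟨by rw [hT]; linarith [neg_abs_le t], by rw [hT]; linarith [le_abs_self t]⟩

end ODEAux

/-- if `F : ℝ³ → ℝ` is continuous and, on every compact interval
`K × ℝ²`, Lipschitz in `(y,z)` uniformly in `x ∈ K`, then for all `x₀, x₁ ∈ ℝ` the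
semilinear problem `Lu = F(x,u,u')`, `u(0) = x₀`, `u'(0) = x₁` has a unique
`C¹`-solution on the real line, i.e. there is a unique `u ∈ C¹(ℝ)` with `u(0) = x₀`
and `u'(x) = e^{−Σ(x)} (2 ∫₀^x e^{Σ(y)} F(y,u(y),u'(y))/σ²(y) dy + x₁)` for all `x`. -/
theorem semilinear_initial_value_problem_exists_unique
    (σ Sig : ℝ → ℝ) (hσ : Continuous σ) (hSig : Continuous Sig)
    (hσpos : ∀ x, 0 < σ x)
    (F : ℝ → ℝ → ℝ → ℝ)
    (hF : Continuous fun p : ℝ × ℝ × ℝ => F p.1 p.2.1 p.2.2)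
    (hLip : ∀ a b : ℝ, ∃ k : ℝ, ∀ x ∈ Icc a b, ∀ y z ytilde ztilde : ℝ,
      |F x y z - F x ytilde ztilde| ≤ k * (|y - ytilde| + |z - ztilde|))
    (x₀ x₁ : ℝ) :
    ∃! u : ℝ → ℝ, ContDiff ℝ 1 u ∧ u 0 = x₀ ∧
      ∀ x : ℝ, deriv u x = Real.exp (-(Sig x)) *
        (2 * (∫ y in (0 : ℝ)..x,
          Real.exp (Sig y) * F y (u y) (deriv u y) / (σ y) ^ 2) + x₁) := by
  classical
  have hσsq : ∀ t, (σ t) ^ 2 ≠ 0 := fun t => pow_ne_zero _ (hσpos t).ne'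
  have hexpSig : Continuous fun t => Real.exp (Sig t) := Real.continuous_exp.comp hSig
  have hexpNegSig : Continuous fun t => Real.exp (-(Sig t)) :=
    Real.continuous_exp.comp hSig.neg
  set vf : ℝ → ℝ × ℝ → ℝ × ℝ := fun t p =>
    (Real.exp (-(Sig t)) * p.2,
     2 * (Real.exp (Sig t) * F t p.1 (Real.exp (-(Sig t)) * p.2) / σ t ^ 2)) with hvf
  -- continuity in time
  have hvcont : ∀ p : ℝ × ℝ, Continuous fun t => vf t p := by
    intro p
    rw [hvf]
    have hFcomp : Continuous fun t => F t p.1 (Real.exp (-(Sig t)) * p.2) :=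
      hF.comp (continuous_id.prodMk (continuous_const.prodMk
        (hexpNegSig.mul continuous_const)))
    exact (hexpNegSig.mul continuous_const).prodMk
      (continuous_const.mul ((hexpSig.mul hFcomp).div (hσ.pow 2) hσsq))
  -- Lipschitz in space, locally uniformly in time
  have hKglob : ∀ T : ℝ, 0 ≤ T → ∃ K : NNReal, ∀ t ∈ Icc (-T) T, LipschitzWith K (vf t) := by
    intro T hT
    obtain ⟨k, hk⟩ := hLip (-T) T
    set k' : ℝ := max k 0 with hk'
    have hk'0 : 0 ≤ k' := le_max_right _ _
    obtain ⟨M₁, hM₁⟩ := isCompact_Icc.exists_bound_of_continuousOn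
      (s := Icc (-T) T) hexpNegSig.continuousOn
    obtain ⟨M₂, hM₂⟩ := isCompact_Icc.exists_bound_of_continuousOn (s := Icc (-T) T)
      ((continuous_const.mul (hexpSig.div (hσ.pow 2) hσsq)).continuousOn)
    have h0mem : (0:ℝ) ∈ Icc (-T) T := ⟨by linarith, hT⟩
    have hM₁0 : 0 ≤ M₁ := le_trans (norm_nonneg _) (hM₁ 0 h0mem)
    have hM₂0 : 0 ≤ M₂ := le_trans (norm_nonneg _) (hM₂ 0 h0mem)
    set Kr : ℝ := max M₁ (M₂ * (k' * (1 + M₁))) with hKr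
    have hKr0 : 0 ≤ Kr := le_trans hM₁0 (le_max_left _ _)
    refine ⟨Real.toNNReal Kr, ?_⟩
    intro t ht
    apply LipschitzWith.of_dist_le_mul
    intro p q
    rw [Real.coe_toNNReal _ hKr0, hvf]
    have hd1 : dist p.1 q.1 ≤ dist p q := by rw [Prod.dist_eq]; exact le_max_left _ _
    have hd2 : dist p.2 q.2 ≤ dist p q := by rw [Prod.dist_eq]; exact le_max_right _ _
    have hdist0 : (0:ℝ) ≤ dist p q := dist_nonneg
    have he1 : |Real.exp (-(Sig t))| ≤ M₁ := by
      have := hM₁ t ht; rwa [Real.norm_eq_abs] at this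
    have he2 : |2 * (Real.exp (Sig t) / σ t ^ 2)| ≤ M₂ := by
      have := hM₂ t ht; rwa [Real.norm_eq_abs] at this
    rw [Prod.dist_eq]
    apply max_le
    · rw [Real.dist_eq]
      have heq : Real.exp (-(Sig t)) * p.2 - Real.exp (-(Sig t)) * q.2
          = Real.exp (-(Sig t)) * (p.2 - q.2) := by ring
      rw [heq, abs_mul]
      have h1 : |p.2 - q.2| = dist p.2 q.2 := (Real.dist_eq _ _).symm
      calc |Real.exp (-(Sig t))| * |p.2 - q.2| ≤ M₁ * dist p q := by
            rw [h1]; exact mul_le_mul he1 hd2 dist_nonneg hM₁0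
        _ ≤ Kr * dist p q := mul_le_mul_of_nonneg_right (le_max_left _ _) hdist0
    · rw [Real.dist_eq]
      have hfactor :
          2 * (Real.exp (Sig t) * F t p.1 (Real.exp (-(Sig t)) * p.2) / σ t ^ 2) -
            2 * (Real.exp (Sig t) * F t q.1 (Real.exp (-(Sig t)) * q.2) / σ t ^ 2)
          = (2 * (Real.exp (Sig t) / σ t ^ 2)) *
              (F t p.1 (Real.exp (-(Sig t)) * p.2) - F t q.1 (Real.exp (-(Sig t)) * q.2)) := by
        ring
      rw [hfactor, abs_mul]
      have habs2 : |Real.exp (-(Sig t)) * p.2 - Real.exp (-(Sig t)) * q.2| ≤ M₁ * dist p q := by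
        have heq : Real.exp (-(Sig t)) * p.2 - Real.exp (-(Sig t)) * q.2
            = Real.exp (-(Sig t)) * (p.2 - q.2) := by ring
        rw [heq, abs_mul]
        have h1 : |p.2 - q.2| = dist p.2 q.2 := (Real.dist_eq _ _).symm
        rw [h1]
        exact mul_le_mul he1 hd2 dist_nonneg hM₁0
      have habs1 : |p.1 - q.1| ≤ dist p q := by
        rw [← Real.dist_eq]; exact hd1
      have hAB : |F t p.1 (Real.exp (-(Sig t)) * p.2) - F t q.1 (Real.exp (-(Sig t)) * q.2)|
          ≤ k' * ((1 + M₁) * dist p q) := by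
        have h := hk t ht p.1 (Real.exp (-(Sig t)) * p.2) q.1 (Real.exp (-(Sig t)) * q.2)
        have hsum : |p.1 - q.1| + |Real.exp (-(Sig t)) * p.2 - Real.exp (-(Sig t)) * q.2|
            ≤ (1 + M₁) * dist p q := by nlinarith
        have hnn : (0:ℝ) ≤ |p.1 - q.1| +
            |Real.exp (-(Sig t)) * p.2 - Real.exp (-(Sig t)) * q.2| := by positivity
        calc |F t p.1 (Real.exp (-(Sig t)) * p.2) - F t q.1 (Real.exp (-(Sig t)) * q.2)|
            ≤ k * (|p.1 - q.1| + |Real.exp (-(Sig t)) * p.2 - Real.exp (-(Sig t)) * q.2|) := h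
          _ ≤ k' * (|p.1 - q.1| + |Real.exp (-(Sig t)) * p.2 - Real.exp (-(Sig t)) * q.2|) :=
              mul_le_mul_of_nonneg_right (le_max_left _ _) hnn
          _ ≤ k' * ((1 + M₁) * dist p q) := mul_le_mul_of_nonneg_left hsum hk'0
      calc |2 * (Real.exp (Sig t) / σ t ^ 2)| *
            |F t p.1 (Real.exp (-(Sig t)) * p.2) - F t q.1 (Real.exp (-(Sig t)) * q.2)|
          ≤ M₂ * (k' * ((1 + M₁) * dist p q)) := by
            apply mul_le_mul he2 hAB (abs_nonneg _) hM₂0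
        _ = (M₂ * (k' * (1 + M₁))) * dist p q := by ring
        _ ≤ Kr * dist p q := mul_le_mul_of_nonneg_right (le_max_right _ _) hdist0
  -- the unique global solution of the first-order system
  obtain ⟨f, ⟨hf0, hf'⟩, hfuniq⟩ := ode_exists_unique_global vf hvcont hKglob (x₀, x₁)
  set u : ℝ → ℝ := fun t => (f t).1 with hu
  set w : ℝ → ℝ := fun t => (f t).2 with hwdef
  have hu' : ∀ t, HasDerivAt u (Real.exp (-(Sig t)) * w t) t := by
    intro t
    have := (ContinuousLinearMap.fst ℝ ℝ ℝ).hasFDerivAt.comp_hasDerivAt t (hf' t)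
    simpa [hvf, Function.comp_def, hu, hwdef] using this
  have hw' : ∀ t, HasDerivAt w
      (2 * (Real.exp (Sig t) * F t (u t) (Real.exp (-(Sig t)) * w t) / σ t ^ 2)) t := by
    intro t
    have := (ContinuousLinearMap.snd ℝ ℝ ℝ).hasFDerivAt.comp_hasDerivAt t (hf' t)
    simpa [hvf, Function.comp_def, hu, hwdef] using this
  have hwcont : Continuous w :=
    continuous_iff_continuousAt.mpr fun t => (hw' t).continuousAt
  have hudiff : Differentiable ℝ u := fun t => (hu' t).differentiableAt
  have hucont : Continuous u := hudiff.continuous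
  have hderivu : ∀ t, deriv u t = Real.exp (-(Sig t)) * w t := fun t => (hu' t).deriv
  have hderivueq : deriv u = fun t => Real.exp (-(Sig t)) * w t := funext hderivu
  have hderivucont : Continuous (deriv u) := by
    rw [hderivueq]; exact hexpNegSig.mul hwcont
  have hC1 : ContDiff ℝ 1 u := contDiff_one_iff_deriv.mpr ⟨hudiff, hderivucont⟩
  set G : ℝ → ℝ := fun y => Real.exp (Sig y) * F y (u y) (deriv u y) / (σ y) ^ 2 with hG
  have hGcont : Continuous G := by
    rw [hG]
    exact (hexpSig.mul (hF.comp (continuous_id.prodMk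
      (hucont.prodMk hderivucont)))).div (hσ.pow 2) hσsq
  have hW' : ∀ t, HasDerivAt (fun s => 2 * (∫ y in (0:ℝ)..s, G y) + x₁) (2 * G t) t := by
    intro t
    have h1 : HasDerivAt (fun s => ∫ y in (0:ℝ)..s, G y) (G t) t :=
      intervalIntegral.integral_hasDerivAt_right (hGcont.intervalIntegrable _ _)
        (hGcont.stronglyMeasurable.stronglyMeasurableAtFilter) hGcont.continuousAt
    exact (h1.const_mul 2).add_const x₁
  have hw0 : w 0 = x₁ := by rw [hwdef]; simp [hf0]
  have hkey : ∀ t, w t = 2 * (∫ y in (0:ℝ)..t, G y) + x₁ := by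
    have hsub : ∀ t, HasDerivAt (fun s => w s - (2 * (∫ y in (0:ℝ)..s, G y) + x₁)) 0 t := by
      intro t
      have h3 : HasDerivAt w (2 * G t) t := by
        have hGt : G t = Real.exp (Sig t) * F t (u t) (Real.exp (-(Sig t)) * w t) / σ t ^ 2 := by
          rw [hG]; simp only; rw [hderivu t]
        rw [hGt]
        exact hw' t
      simpa [Pi.sub_def] using h3.sub (hW' t)
    intro t
    have hconst := is_const_of_deriv_eq_zero
      (f := fun s => w s - (2 * (∫ y in (0:ℝ)..s, G y) + x₁))
      (fun s => (hsub s).differentiableAt) (fun s => (hsub s).deriv) t 0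
    simp only [intervalIntegral.integral_same, mul_zero, zero_add] at hconst
    have : w t - (2 * (∫ y in (0:ℝ)..t, G y) + x₁) = 0 := by rw [hconst, hw0]; ring
    linarith
  have hprop : ∀ x : ℝ, deriv u x = Real.exp (-(Sig x)) *
      (2 * (∫ y in (0 : ℝ)..x, Real.exp (Sig y) * F y (u y) (deriv u y) / (σ y) ^ 2) + x₁) := by
    intro x
    rw [hderivu x, hkey x]
  have hu0 : u 0 = x₀ := by rw [hu]; simp [hf0]
  refine ⟨u, ⟨hC1, hu0, hprop⟩, ?_⟩
  -- uniqueness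
  rintro g ⟨hgC1, hg0, hgid⟩
  have hgdiff : Differentiable ℝ g := (contDiff_one_iff_deriv.mp hgC1).1
  have hgderivcont : Continuous (deriv g) := (contDiff_one_iff_deriv.mp hgC1).2
  have hgcont : Continuous g := hgdiff.continuous
  set Gg : ℝ → ℝ := fun y => Real.exp (Sig y) * F y (g y) (deriv g y) / (σ y) ^ 2 with hGg
  have hGgcont : Continuous Gg := by
    rw [hGg]
    exact (hexpSig.mul (hF.comp (continuous_id.prodMk
      (hgcont.prodMk hgderivcont)))).div (hσ.pow 2) hσsq
  set wg : ℝ → ℝ := fun s => 2 * (∫ y in (0:ℝ)..s, Gg y) + x₁ with hwg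
  have hWg' : ∀ t, HasDerivAt wg (2 * Gg t) t := by
    intro t
    have h1 : HasDerivAt (fun s => ∫ y in (0:ℝ)..s, Gg y) (Gg t) t :=
      intervalIntegral.integral_hasDerivAt_right (hGgcont.intervalIntegrable _ _)
        (hGgcont.stronglyMeasurable.stronglyMeasurableAtFilter) hGgcont.continuousAt
    exact (h1.const_mul 2).add_const x₁
  set fg : ℝ → ℝ × ℝ := fun t => (g t, wg t) with hfg
  have harg : ∀ t, Real.exp (-(Sig t)) * wg t = deriv g t := by
    intro t
    rw [hwg]
    exact (hgid t).symm
  have hfg0 : fg 0 = (x₀, x₁) := by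
    rw [hfg]
    simp only
    rw [hwg]
    simp [hg0, intervalIntegral.integral_same]
  have hfg' : ∀ t, HasDerivAt fg (vf t (fg t)) t := by
    intro t
    have hval : vf t (fg t) = (deriv g t, 2 * Gg t) := by
      rw [hvf, hfg]
      simp only [Prod.mk.injEq]
      refine ⟨harg t, ?_⟩
      rw [harg t, hGg]
    rw [hval]
    exact ((hgdiff t).hasDerivAt).prodMk (hWg' t)
  have hfgf : fg = f := hfuniq fg ⟨hfg0, hfg'⟩
  funext t
  have := congrArg (fun h : ℝ → ℝ × ℝ => (h t).1) hfgf
  simpa [hfg, hu] using this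
end
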